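/- Let N ≥ 1 be a natural number and let x ∈ ℝ with |x| ≤ π/N. Then ‖∑_{n=0}^{N−1} exp(i·n·x)‖² ≥ 1 / (sin(π/(2N)))². -/

import Mathlib

open Real Finset

namespace Stmt7Aux

noncomputable def f (N : ℕ) (x : ℝ) : ℝ :=
  ∑ n : Fin N, Real.cos (((n : ℝ) - ((N : ℝ) - 1) / 2) * x)

lemma telescope (N : ℕ) (x : ℝ) :
    f N x * (2 * Real.sin (x / 2)) = 2 * Real.sin ((N : ℝ) * x / 2) := by
  have key : ∀ n : ℕ,
      Real.sin (((n : ℝ) + 1 - (N : ℝ) / 2) * x) - Real.sin (((n : ℝ) - (N : ℝ) / 2) * x)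
        = Real.cos (((n : ℝ) - ((N : ℝ) - 1) / 2) * x) * (2 * Real.sin (x / 2)) := by
    intro n
    rw [Real.sin_sub_sin]
    ring_nf
  unfold f
  rw [Fin.sum_univ_eq_sum_range
    (fun n : ℕ => Real.cos (((n : ℝ) - ((N : ℝ) - 1) / 2) * x)) N, Finset.sum_mul]
  calc ∑ n ∈ Finset.range N, Real.cos (((n : ℝ) - ((N : ℝ) - 1) / 2) * x) * (2 * Real.sin (x / 2))
      = ∑ n ∈ Finset.range N,
        (Real.sin (((n : ℝ) + 1 - (N : ℝ) / 2) * x) - Real.sin (((n : ℝ) - (N : ℝ) / 2) * x)) := by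
        refine Finset.sum_congr rfl fun n _ => ?_
        rw [key n]
    _ = Real.sin (((N : ℝ) - (N : ℝ) / 2) * x) - Real.sin (((0 : ℝ) - (N : ℝ) / 2) * x) := by
        have := Finset.sum_range_sub (fun n : ℕ => Real.sin (((n : ℝ) - (N : ℝ) / 2) * x)) N
        simpa using this
    _ = 2 * Real.sin ((N : ℝ) * x / 2) := by
        have h1 : ((N : ℝ) - (N : ℝ) / 2) * x = (N : ℝ) * x / 2 := by ring
        have h2 : ((0 : ℝ) - (N : ℝ) / 2) * x = -((N : ℝ) * x / 2) := by ring
        rw [h1, h2, Real.sin_neg]; ring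

lemma endpoint (N : ℕ) (hN : 1 ≤ N) :
    f N (Real.pi / N) = 1 / Real.sin (Real.pi / (2 * N)) := by
  have hN0 : (0 : ℝ) < N := by exact_mod_cast hN
  have hsin : 0 < Real.sin (Real.pi / (2 * N)) := by
    apply Real.sin_pos_of_pos_of_lt_pi
    · positivity
    · rw [div_lt_iff₀ (by positivity)]
      have h1 : (1 : ℝ) ≤ (N : ℝ) := by exact_mod_cast hN
      nlinarith [Real.pi_pos]
  have h := telescope N (Real.pi / N)
  have hx2 : (Real.pi / N) / 2 = Real.pi / (2 * N) := by ring
  have hNx : (N : ℝ) * (Real.pi / N) / 2 = Real.pi / 2 := by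
    field_simp
  rw [hx2, hNx, Real.sin_pi_div_two] at h
  field_simp at h ⊢
  rw [eq_div_iff (by have := hsin.ne'; rwa [mul_comm] at this)]
  linarith

lemma f_neg (N : ℕ) (x : ℝ) : f N (-x) = f N x := by
  unfold f
  refine Finset.sum_congr rfl fun n _ => ?_
  rw [mul_neg, Real.cos_neg]

lemma f_concave (N : ℕ) (hN : 1 ≤ N) :
    ConcaveOn ℝ (Set.Icc (-(Real.pi / N)) (Real.pi / N)) (f N) := by
  have hN0 : (0 : ℝ) < N := by exact_mod_cast hN
  have hcos := strictConcaveOn_cos_Icc.concaveOn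
  refine ⟨convex_Icc _ _, fun x hx y hy a b ha hb hab => ?_⟩
  unfold f
  rw [Finset.smul_sum, Finset.smul_sum, ← Finset.sum_add_distrib]
  refine Finset.sum_le_sum fun n _ => ?_
  set k : ℝ := (n : ℝ) - ((N : ℝ) - 1) / 2 with hk
  have hkabs : |k| ≤ ((N : ℝ) - 1) / 2 := by
    rw [abs_le]
    have h1 : (0 : ℝ) ≤ (n : ℝ) := Nat.cast_nonneg n
    have h2 : (n : ℝ) ≤ (N : ℝ) - 1 := by
      have := n.2
      have : (n : ℝ) + 1 ≤ (N : ℝ) := by exact_mod_cast n.2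
      linarith
    constructor <;> [linarith; linarith]
  have hmem : ∀ z : ℝ, z ∈ Set.Icc (-(Real.pi / N)) (Real.pi / N) →
      k * z ∈ Set.Icc (-(Real.pi / 2)) (Real.pi / 2) := by
    intro z hz
    have habs : |z| ≤ Real.pi / N := abs_le.mpr ⟨hz.1, hz.2⟩
    have : |k * z| ≤ Real.pi / 2 := by
      rw [abs_mul]
      calc |k| * |z| ≤ (((N : ℝ) - 1) / 2) * (Real.pi / N) := by
            apply mul_le_mul hkabs habs (abs_nonneg _)
            have : (1 : ℝ) ≤ (N : ℝ) := by exact_mod_cast hN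
            linarith
        _ ≤ Real.pi / 2 := by
            rw [div_mul_div_comm, div_le_div_iff₀ (by positivity) two_pos]
            nlinarith [Real.pi_pos]
    exact Set.mem_Icc.mpr (abs_le.mp this)
  have h := hcos.2 (hmem x hx) (hmem y hy) ha hb hab
  simp only [smul_eq_mul] at h ⊢
  have hlin : k * (a * x + b * y) = a * (k * x) + b * (k * y) := by ring
  rw [hlin]
  linarith [h]

lemma re_le_norm (N : ℕ) (x : ℝ) :
    f N x ≤ ‖∑ n : Fin N, Complex.exp (Complex.I * n * x)‖ := by
  set S : ℂ := ∑ n : Fin N, Complex.exp (Complex.I * n * x) with hS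
  have hrot : Complex.exp ((-(((N : ℝ) - 1) / 2 * x) : ℝ) * Complex.I) * S
      = ∑ n : Fin N, Complex.exp ((((n : ℝ) - ((N : ℝ) - 1) / 2) * x : ℝ) * Complex.I) := by
    rw [hS, Finset.mul_sum]
    refine Finset.sum_congr rfl fun n _ => ?_
    rw [← Complex.exp_add]
    congr 1
    push_cast
    ring
  have hre : (Complex.exp ((-(((N : ℝ) - 1) / 2 * x) : ℝ) * Complex.I) * S).re = f N x := by
    rw [hrot, Complex.re_sum]
    refine Finset.sum_congr rfl fun n _ => ?_
    exact Complex.exp_ofReal_mul_I_re _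
  have hnorm : ‖Complex.exp ((-(((N : ℝ) - 1) / 2 * x) : ℝ) * Complex.I) * S‖ = ‖S‖ := by
    rw [norm_mul, Complex.norm_exp_ofReal_mul_I, one_mul]
  calc f N x
      = (Complex.exp ((-(((N : ℝ) - 1) / 2 * x) : ℝ) * Complex.I) * S).re := hre.symm
    _ ≤ ‖Complex.exp ((-(((N : ℝ) - 1) / 2 * x) : ℝ) * Complex.I) * S‖ := Complex.re_le_norm _
    _ = ‖S‖ := hnorm

end Stmt7Aux

/-- Key quantitative step of Theorem 1: over a beam of half-width `π / N`,
the passive beamforming gain is at least `1 / sin² (π / (2 N))`. -/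
theorem stmt_7 (N : ℕ) (hN : 1 ≤ N) (x : ℝ) (hx : |x| ≤ Real.pi / N) :
    1 / Real.sin (Real.pi / (2 * N)) ^ 2 ≤
      ‖∑ n : Fin N, Complex.exp (Complex.I * n * x)‖ ^ 2 := by
  have hN0 : (0 : ℝ) < N := by exact_mod_cast hN
  have hsin : 0 < Real.sin (Real.pi / (2 * N)) := by
    apply Real.sin_pos_of_pos_of_lt_pi
    · positivity
    · rw [div_lt_iff₀ (by positivity)]
      have h1 : (1 : ℝ) ≤ (N : ℝ) := by exact_mod_cast hN
      nlinarith [Real.pi_pos]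
  set V : ℝ := 1 / Real.sin (Real.pi / (2 * N)) with hV
  have hV0 : 0 < V := by positivity
  have hxm : x ∈ Set.Icc (-(Real.pi / N)) (Real.pi / N) :=
    Set.mem_Icc.mpr (abs_le.mp hx)
  have hpn : (0:ℝ) ≤ Real.pi / N := by positivity
  have hord : -(Real.pi / N) ≤ Real.pi / N := by linarith
  have hseg : x ∈ segment ℝ (-(Real.pi / N)) (Real.pi / N) := by
    rw [segment_eq_Icc hord]
    exact hxm
  have hmin := (Stmt7Aux.f_concave N hN).ge_on_segment
    (Set.mem_Icc.mpr ⟨le_refl _, hord⟩)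
    (Set.mem_Icc.mpr ⟨hord, le_refl _⟩)
    hseg
  have hends : min (Stmt7Aux.f N (-(Real.pi / N))) (Stmt7Aux.f N (Real.pi / N)) = V := by
    rw [Stmt7Aux.f_neg, Stmt7Aux.endpoint N hN, min_self, hV]
  have hfx : V ≤ Stmt7Aux.f N x := by rw [← hends]; exact hmin
  have hle : V ≤ ‖∑ n : Fin N, Complex.exp (Complex.I * n * x)‖ :=
    le_trans hfx (Stmt7Aux.re_le_norm N x)
  have : V ^ 2 ≤ ‖∑ n : Fin N, Complex.exp (Complex.I * n * x)‖ ^ 2 :=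
    pow_le_pow_left₀ hV0.le hle 2
  calc 1 / Real.sin (Real.pi / (2 * N)) ^ 2 = V ^ 2 := by rw [hV, div_pow, one_pow]
    _ ≤ _ := this
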